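/- arXiv:1806.04700 — 2 statements merged into one kernel-verified Lean document; each statement's English description precedes it below -/
import Mathlib

section
/- Let C > 0 be given and let Q(x) = a_d x^d + … + a_0 be a real polynomial with leading coefficient a_d > 0 and degree d ≥ 2. Then, as r → ∞, ∫_C^r exp(Q(y)) dy = (1/Q'(r)) exp(Q(r)) + O( (1/Q'(r))^2 exp(Q(r)) ). -/
open Filter Topology Asymptotics MeasureTheory

lemma deriv_nd_lc (p : Polynomial ℝ) (hp : 1 ≤ p.natDegree) :
    p.derivative.natDegree = p.natDegree - 1 ∧
      p.derivative.leadingCoeff = (p.natDegree : ℝ) * p.leadingCoeff := by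
  have hdeg := Polynomial.degree_derivative_eq p (by omega)
  have hnd : p.derivative.natDegree = p.natDegree - 1 :=
    Polynomial.natDegree_eq_of_degree_eq_some hdeg
  refine ⟨hnd, ?_⟩
  have h1 : p.natDegree - 1 + 1 = p.natDegree := by omega
  rw [Polynomial.leadingCoeff, hnd, Polynomial.coeff_derivative, h1,
    Polynomial.leadingCoeff]
  push_cast [Nat.cast_sub hp]
  ring

lemma ev_pos (p : Polynomial ℝ) (hp : 0 < p.leadingCoeff) :
    ∀ᶠ x in atTop, 0 < p.eval x := by
  rcases Nat.eq_zero_or_pos p.natDegree with h0 | h1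
  · refine Filter.Eventually.of_forall fun x => ?_
    rw [Polynomial.eq_C_of_natDegree_eq_zero h0, Polynomial.eval_C]
    have : p.leadingCoeff = p.coeff 0 := by rw [Polynomial.leadingCoeff, h0]
    rwa [this] at hp
  · have hdeg : 0 < p.degree := Polynomial.natDegree_pos_iff_degree_pos.mp h1
    exact (Polynomial.tendsto_atTop_of_leadingCoeff_nonneg p hdeg hp.le).eventually_gt_atTop 0

set_option maxHeartbeats 1000000 in
/-- For `C > 0` and a real polynomial `Q` of degree `d ≥ 2` with positive
leading coefficient, `∫_C^r e^{Q(y)} dy = e^{Q(r)}/Q'(r) + O(e^{Q(r)}/Q'(r)^2)` as `r → ∞`. -/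
theorem stmt4 (C : ℝ) (hC : 0 < C) (Q : Polynomial ℝ)
    (hdeg : 2 ≤ Q.natDegree) (hlead : 0 < Q.leadingCoeff) :
    (fun r : ℝ => (∫ y in C..r, Real.exp (Q.eval y)) -
        Real.exp (Q.eval r) / Q.derivative.eval r)
      =O[atTop] fun r : ℝ => Real.exp (Q.eval r) / (Q.derivative.eval r) ^ 2 := by
  set d := Q.natDegree with hd
  set P1 := Q.derivative with hP1
  set P2 := P1.derivative with hP2
  set P3 := P2.derivative with hP3
  obtain ⟨hnd1, hlc1⟩ := deriv_nd_lc Q (by omega)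
  have hl1 : 0 < P1.leadingCoeff := by
    rw [hlc1]; positivity
  obtain ⟨hnd2, hlc2⟩ := deriv_nd_lc P1 (by rw [hnd1]; omega)
  have hl2 : 0 < P2.leadingCoeff := by
    rw [hlc2, hnd1]
    have : (0:ℝ) < ((d - 1 : ℕ) : ℝ) := by
      have : 1 ≤ d - 1 := by omega
      exact_mod_cast Nat.lt_of_lt_of_le Nat.zero_lt_one this
    positivity
  have hP1ne : P1 ≠ 0 := fun h => by simp [h] at hl1
  have hP2ne : P2 ≠ 0 := fun h => by simp [h] at hl2
  have hQne : Q ≠ 0 := fun h => by simp [h] at hlead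
  have hdeg1 : P1.degree = ((d - 1 : ℕ) : WithBot ℕ) := by
    rw [Polynomial.degree_eq_natDegree hP1ne, hnd1]
  have hdeg2 : P2.degree = ((d - 2 : ℕ) : WithBot ℕ) := by
    rw [Polynomial.degree_eq_natDegree hP2ne, hnd2, hnd1]
    norm_cast
  have hdegQ : Q.degree = ((d : ℕ) : WithBot ℕ) := Polynomial.degree_eq_natDegree hQne
  set num := P3 * P1 - Polynomial.C 3 * P2 ^ 2 with hnum
  set den := P1 ^ 2 * P2 with hden
  -- degree of den
  have hdegden : den.degree = ((3 * d - 4 : ℕ) : WithBot ℕ) := by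
    rw [hden, Polynomial.degree_mul, Polynomial.degree_pow, hdeg1, hdeg2, two_nsmul]
    norm_cast
    omega
  -- degree of num is small
  have hdegnum : num.degree < den.degree := by
    have h3 : P3.degree ≤ ((d - 3 : ℕ) : WithBot ℕ) := by
      refine le_trans (Polynomial.degree_le_natDegree) ?_
      have h := Polynomial.natDegree_derivative_le P2
      rw [← hP3, hnd2, hnd1] at h
      exact_mod_cast (by omega : P3.natDegree ≤ d - 3)
    have hnum_le : num.degree ≤ ((2 * d - 3 : ℕ) : WithBot ℕ) := by
      refine le_trans (Polynomial.degree_sub_le _ _) (max_le ?_ ?_)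
      · refine le_trans (Polynomial.degree_mul_le _ _) ?_
        calc P3.degree + P1.degree ≤ ((d-3:ℕ) : WithBot ℕ) + ((d-1:ℕ) : WithBot ℕ) :=
              add_le_add h3 (le_of_eq hdeg1)
          _ ≤ ((2*d-3:ℕ) : WithBot ℕ) := by
              norm_cast
              omega
      · refine le_trans (Polynomial.degree_mul_le _ _) ?_
        have hc : (Polynomial.C (3:ℝ)).degree = 0 := Polynomial.degree_C (by norm_num)
        rw [hc, zero_add, Polynomial.degree_pow, hdeg2, two_nsmul]
        norm_cast
        omega
    refine lt_of_le_of_lt hnum_le ?_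
    rw [hdegden]
    exact_mod_cast (by omega : 2*d-3 < 3*d-4)
  have tendsto_nd : Tendsto (fun x => num.eval x / den.eval x) atTop (𝓝 0) :=
    Polynomial.div_tendsto_zero_of_degree_lt num den hdegnum
  have tendsto_21 : Tendsto (fun x => P2.eval x / P1.eval x) atTop (𝓝 0) :=
    Polynomial.div_tendsto_zero_of_degree_lt P2 P1 (by rw [hdeg1, hdeg2]; exact_mod_cast by omega)
  have tendsto_Q1 : Tendsto (fun x => Q.eval x / P1.eval x) atTop atTop := by
    refine Polynomial.div_tendsto_atTop_of_degree_gt Q P1 ?_ hP1ne (by positivity)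
    rw [hdeg1, hdegQ]; exact_mod_cast by omega
  -- eventual facts
  have hev3 : ∀ᶠ y in atTop, |num.eval y / den.eval y| < 1/2 := by
    have h0 := tendsto_nd.abs
    simp only [abs_zero] at h0
    exact h0.eventually_lt_const (by norm_num)
  have hev4 : ∀ᶠ y in atTop, P2.eval y / P1.eval y < 1 :=
    tendsto_21.eventually_lt_const one_pos
  have hev5 : ∀ᶠ y in atTop, (2:ℝ) ≤ Q.eval y / P1.eval y :=
    tendsto_Q1.eventually_ge_atTop 2
  have hall : ∀ᶠ y in atTop, 0 < P1.eval y ∧ 0 < P2.eval y ∧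
      |num.eval y| ≤ den.eval y / 2 ∧ P2.eval y ≤ P1.eval y ∧
      2 * P1.eval y ≤ Q.eval y := by
    filter_upwards [ev_pos P1 hl1, ev_pos P2 hl2, hev3, hev4, hev5] with y h1 h2 h3 h4 h5
    have hdeny : 0 < den.eval y := by
      simp only [hden, Polynomial.eval_mul, Polynomial.eval_pow]
      positivity
    refine ⟨h1, h2, ?_, ?_, ?_⟩
    · rw [abs_div, abs_of_pos hdeny] at h3
      have := (div_lt_iff₀ hdeny).mp h3
      linarith
    · have := (div_lt_one h1).mp h4
      linarith
    · have := (le_div_iff₀ h1).mp h5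
      linarith
  rw [eventually_atTop] at hall
  obtain ⟨R0, hR0⟩ := hall
  set R := max R0 C with hRdef
  have hprop : ∀ y, R ≤ y → 0 < P1.eval y ∧ 0 < P2.eval y ∧
      |num.eval y| ≤ den.eval y / 2 ∧ P2.eval y ≤ P1.eval y ∧
      2 * P1.eval y ≤ Q.eval y :=
    fun y hy => hR0 y (le_trans (le_max_left _ _) hy)
  set K : ℝ := (∫ y in C..R, Real.exp (Q.eval y)) - Real.exp (Q.eval R) / P1.eval R with hK
  set GR : ℝ := Real.exp (Q.eval R) * P2.eval R / (P1.eval R)^3 with hGR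
  rw [Asymptotics.isBigO_iff]
  refine ⟨|K| + 2*|GR| + 2, ?_⟩
  filter_upwards [eventually_ge_atTop R] with r hr
  have hIcc : ∀ y ∈ Set.uIcc R r, R ≤ y := by
    rw [Set.uIcc_of_le hr]; exact fun y hy => hy.1
  -- continuity facts
  have hcexp : Continuous fun y : ℝ => Real.exp (Q.eval y) :=
    Real.continuous_exp.comp Q.continuous
  have hcψ : ContinuousOn (fun y => Real.exp (Q.eval y) * P2.eval y / (P1.eval y)^2)
      (Set.uIcc R r) := by
    apply ContinuousOn.div ((hcexp.mul P2.continuous).continuousOn)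
      ((P1.continuous.pow 2).continuousOn)
    intro y hy
    have := (hprop y (hIcc y hy)).1
    exact pow_ne_zero _ this.ne'
  have hcg' : ContinuousOn (fun y => Real.exp (Q.eval y) * P2.eval y / (P1.eval y)^2 +
      Real.exp (Q.eval y) * num.eval y / (P1.eval y)^4) (Set.uIcc R r) := by
    refine hcψ.add (ContinuousOn.div ((hcexp.mul num.continuous).continuousOn)
      ((P1.continuous.pow 4).continuousOn) ?_)
    intro y hy
    have := (hprop y (hIcc y hy)).1
    positivity
  have hintψ : IntervalIntegrable (fun y => Real.exp (Q.eval y) * P2.eval y / (P1.eval y)^2)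
      volume R r := hcψ.intervalIntegrable
  have hintg' : IntervalIntegrable (fun y => Real.exp (Q.eval y) * P2.eval y / (P1.eval y)^2 +
      Real.exp (Q.eval y) * num.eval y / (P1.eval y)^4) volume R r := hcg'.intervalIntegrable
  -- FTC 1
  have hderivF : ∀ y ∈ Set.uIcc R r, HasDerivAt (fun x => Real.exp (Q.eval x) / P1.eval x)
      (Real.exp (Q.eval y) - Real.exp (Q.eval y) * P2.eval y / (P1.eval y)^2) y := by
    intro y hy
    have hp1 : 0 < P1.eval y := (hprop y (hIcc y hy)).1
    have hQd : HasDerivAt (fun x => Q.eval x) (P1.eval y) y := Q.hasDerivAt y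
    have hP1d : HasDerivAt (fun x => P1.eval x) (P2.eval y) y := P1.hasDerivAt y
    have h := hQd.exp.div hP1d hp1.ne'
    refine h.congr_deriv ?_
    field_simp
  have hFTC1 : ∫ y in R..r, (Real.exp (Q.eval y) -
      Real.exp (Q.eval y) * P2.eval y / (P1.eval y)^2) =
      Real.exp (Q.eval r) / P1.eval r - Real.exp (Q.eval R) / P1.eval R :=
    intervalIntegral.integral_eq_sub_of_hasDerivAt hderivF
      ((hcexp.intervalIntegrable R r).sub hintψ)
  have hsub : ∫ y in R..r, (Real.exp (Q.eval y) -
      Real.exp (Q.eval y) * P2.eval y / (P1.eval y)^2) =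
      (∫ y in R..r, Real.exp (Q.eval y)) -
      ∫ y in R..r, Real.exp (Q.eval y) * P2.eval y / (P1.eval y)^2 :=
    intervalIntegral.integral_sub (hcexp.intervalIntegrable R r) hintψ
  -- FTC 2
  have hderivG : ∀ y ∈ Set.uIcc R r,
      HasDerivAt (fun x => Real.exp (Q.eval x) * P2.eval x / (P1.eval x)^3)
      (Real.exp (Q.eval y) * P2.eval y / (P1.eval y)^2 +
        Real.exp (Q.eval y) * num.eval y / (P1.eval y)^4) y := by
    intro y hy
    have hp1 : 0 < P1.eval y := (hprop y (hIcc y hy)).1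
    have hQd : HasDerivAt (fun x => Q.eval x) (P1.eval y) y := Q.hasDerivAt y
    have hP1d : HasDerivAt (fun x => P1.eval x) (P2.eval y) y := P1.hasDerivAt y
    have hP2d : HasDerivAt (fun x => P2.eval x) (P3.eval y) y := P2.hasDerivAt y
    have hnumd := (hQd.exp.mul hP2d)
    have hdend : HasDerivAt (fun x => (P1.eval x)^3) (3 * (P1.eval y)^2 * P2.eval y) y := by
      have h := hP1d.pow 3; simp at h; exact h
    have h := hnumd.div hdend (by positivity)
    refine h.congr_deriv ?_
    simp only [hnum, Polynomial.eval_sub, Polynomial.eval_mul, Polynomial.eval_C,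
      Polynomial.eval_pow, Pi.mul_apply]
    field_simp
    ring
  have hFTC2 : ∫ y in R..r, (Real.exp (Q.eval y) * P2.eval y / (P1.eval y)^2 +
      Real.exp (Q.eval y) * num.eval y / (P1.eval y)^4) =
      Real.exp (Q.eval r) * P2.eval r / (P1.eval r)^3 - GR :=
    intervalIntegral.integral_eq_sub_of_hasDerivAt hderivG hintg'
  -- pointwise comparison
  have hψle : ∀ y ∈ Set.Icc R r,
      Real.exp (Q.eval y) * P2.eval y / (P1.eval y)^2 ≤
      2 * (Real.exp (Q.eval y) * P2.eval y / (P1.eval y)^2 +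
        Real.exp (Q.eval y) * num.eval y / (P1.eval y)^4) := by
    intro y hy
    obtain ⟨hp1, hp2, hnb, -, -⟩ := hprop y hy.1
    have he : 0 < Real.exp (Q.eval y) := Real.exp_pos _
    rw [← sub_nonneg]
    have hde : den.eval y = (P1.eval y)^2 * P2.eval y := by
      simp [hden, Polynomial.eval_mul, Polynomial.eval_pow]
    have hexpand : 2 * (Real.exp (Q.eval y) * P2.eval y / (P1.eval y)^2 +
        Real.exp (Q.eval y) * num.eval y / (P1.eval y)^4) -
        Real.exp (Q.eval y) * P2.eval y / (P1.eval y)^2 =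
        Real.exp (Q.eval y) * (P2.eval y * (P1.eval y)^2 + 2 * num.eval y) / (P1.eval y)^4 := by
      field_simp
      ring
    rw [hexpand]
    apply div_nonneg _ (by positivity)
    apply mul_nonneg he.le
    have h1 : -(num.eval y) ≤ |num.eval y| := neg_le_abs _
    rw [hde] at hnb
    nlinarith
  have hψnonneg : 0 ≤ ∫ y in R..r, Real.exp (Q.eval y) * P2.eval y / (P1.eval y)^2 := by
    apply intervalIntegral.integral_nonneg hr
    intro y hy
    obtain ⟨hp1, hp2, -, -, -⟩ := hprop y hy.1
    positivity
  have hmono : (∫ y in R..r, Real.exp (Q.eval y) * P2.eval y / (P1.eval y)^2) ≤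
      2 * (Real.exp (Q.eval r) * P2.eval r / (P1.eval r)^3 - GR) := by
    have h2int : IntervalIntegrable (fun y => 2 * (Real.exp (Q.eval y) * P2.eval y / (P1.eval y)^2 +
        Real.exp (Q.eval y) * num.eval y / (P1.eval y)^4)) volume R r :=
      (hcg'.const_smul (2:ℝ)).intervalIntegrable
    have := intervalIntegral.integral_mono_on hr hintψ h2int hψle
    rwa [intervalIntegral.integral_const_mul, hFTC2] at this
  -- splitting the integral
  have hadd : (∫ y in C..r, Real.exp (Q.eval y)) =
      (∫ y in C..R, Real.exp (Q.eval y)) + ∫ y in R..r, Real.exp (Q.eval y) :=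
    (intervalIntegral.integral_add_adjacent_intervals (hcexp.intervalIntegrable C R)
      (hcexp.intervalIntegrable R r)).symm
  -- error representation
  have hE : (∫ y in C..r, Real.exp (Q.eval y)) - Real.exp (Q.eval r) / P1.eval r =
      K + ∫ y in R..r, Real.exp (Q.eval y) * P2.eval y / (P1.eval y)^2 := by
    rw [hadd, hK]
    have := hFTC1
    rw [hsub] at this
    linarith
  -- final bounds
  obtain ⟨hp1r, hp2r, -, hp21r, h2pr⟩ := hprop r hr
  have hGrle : Real.exp (Q.eval r) * P2.eval r / (P1.eval r)^3 ≤
      Real.exp (Q.eval r) / (P1.eval r)^2 := by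
    rw [div_le_div_iff₀ (by positivity) (by positivity)]
    have he := (Real.exp_pos (Q.eval r)).le
    calc Real.exp (Q.eval r) * P2.eval r * (P1.eval r)^2
        ≤ Real.exp (Q.eval r) * P1.eval r * (P1.eval r)^2 := by
          gcongr
      _ = Real.exp (Q.eval r) * (P1.eval r)^3 := by ring
  have hg1 : 1 ≤ Real.exp (Q.eval r) / (P1.eval r)^2 := by
    have h1 : P1.eval r ≤ Real.exp (Q.eval r / 2) := by
      have := Real.add_one_le_exp (Q.eval r / 2)
      linarith
    have h2 : (P1.eval r)^2 ≤ Real.exp (Q.eval r) := by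
      calc (P1.eval r)^2 ≤ (Real.exp (Q.eval r / 2))^2 := by
            exact pow_le_pow_left₀ hp1r.le h1 2
        _ = Real.exp (Q.eval r) := by
            rw [sq, ← Real.exp_add]
            ring_nf
    rw [le_div_iff₀ (by positivity)]
    linarith
  have hgpos : 0 < Real.exp (Q.eval r) / (P1.eval r)^2 := by positivity
  rw [Real.norm_eq_abs, Real.norm_eq_abs, abs_of_pos hgpos, hE]
  set I := ∫ y in R..r, Real.exp (Q.eval y) * P2.eval y / (P1.eval y)^2 with hI
  have habs : |K + I| ≤ |K| + I := by
    calc |K + I| ≤ |K| + |I| := abs_add_le _ _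
      _ = |K| + I := by rw [abs_of_nonneg hψnonneg]
  have hGR : GR ≥ -|GR| := neg_abs_le _
  set g := Real.exp (Q.eval r) / (P1.eval r)^2 with hg
  have hGr2 : Real.exp (Q.eval r) * P2.eval r / (P1.eval r)^3 ≤ g := hGrle
  have hcoef : 0 ≤ |K| + 2*|GR| := by
    have h1 := abs_nonneg K
    have h2 := abs_nonneg GR
    linarith
  calc |K + I| ≤ |K| + I := habs
    _ ≤ |K| + 2 * (Real.exp (Q.eval r) * P2.eval r / (P1.eval r)^3 - GR) := by linarith
    _ ≤ |K| + 2*|GR| + 2 * g := by linarith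
    _ ≤ (|K| + 2*|GR|) * g + 2 * g := by
        nlinarith [mul_le_mul_of_nonneg_left hg1 hcoef]
    _ = (|K| + 2*|GR| + 2) * g := by ring
end

section
/- Let Θ = (θ_m)_{m≥1} with θ_m ≥ 0, and endow S_n with the measure P_Θ. Let L_1(σ) denote the length of the cycle of σ containing the element 1. Then for every 1 ≤ m ≤ n, P_Θ[L_1 = m] = (θ_m / n) · (h_{n-m} / h_n), where h_j are the normalization constants of P_Θ. -/
open Filter Topology Asymptotics

/-- `C_m(σ)`: the number of cycles of length `m` in the cycle decomposition of `σ`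
(fixed points count as cycles of length `1`). -/
noncomputable def cycleCount {n : ℕ} (m : ℕ) (σ : Equiv.Perm (Fin n)) : ℕ :=
  if m = 1 then n - σ.support.card else σ.cycleType.count m

/-- The weight `∏_{m=1}^n θ_m^{C_m(σ)}`. -/
noncomputable def thetaWeight (θ : ℕ → ℝ) {n : ℕ} (σ : Equiv.Perm (Fin n)) : ℝ :=
  ∏ m ∈ Finset.Icc 1 n, θ m ^ cycleCount m σ

/-- The normalization constant `h_n` of the measure `P_Θ`. -/
noncomputable def hTheta (θ : ℕ → ℝ) (n : ℕ) : ℝ :=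
  (∑ σ : Equiv.Perm (Fin n), thetaWeight θ σ) / n.factorial

/-- The probability of `σ` under the measure `P_Θ`. -/
noncomputable def probTheta (θ : ℕ → ℝ) {n : ℕ} (σ : Equiv.Perm (Fin n)) : ℝ :=
  thetaWeight θ σ / (hTheta θ n * n.factorial)

open scoped Classical in
/-- The probability of a set of permutations under the measure `P_Θ`. -/
noncomputable def probOfTheta (θ : ℕ → ℝ) {n : ℕ} (s : Set (Equiv.Perm (Fin n))) : ℝ :=
  ∑ σ : Equiv.Perm (Fin n), if σ ∈ s then probTheta θ σ else 0

open scoped Classical in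
/-- `L_1(σ)`: the length of the cycle of `σ` containing the first element. -/
noncomputable def lenCycleOfOne {n : ℕ} (σ : Equiv.Perm (Fin n)) : ℕ :=
  if h : 0 < n then (Finset.univ.filter fun y => σ.SameCycle ⟨0, h⟩ y).card else 0

lemma thetaWeight_eq (θ : ℕ → ℝ) {N : ℕ} (ρ : Equiv.Perm (Fin N)) :
    thetaWeight θ ρ = θ 1 ^ (N - ρ.support.card) * ((ρ.cycleType.map θ).prod) := by
  classical
  rcases Nat.eq_zero_or_pos N with hN | hN
  · subst hN
    have hρ : ρ = 1 := Subsingleton.elim _ _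
    subst hρ
    simp [thetaWeight]
  · have hins : Finset.Icc 1 N = insert 1 (Finset.Icc 2 N) := by
      ext k; simp only [Finset.mem_Icc, Finset.mem_insert]; omega
    rw [thetaWeight, hins, Finset.prod_insert (by simp)]
    have h1 : cycleCount 1 ρ = N - ρ.support.card := by simp [cycleCount]
    rw [h1]
    congr 1
    rw [Finset.prod_multiset_map_count]
    have hstep : ∏ x ∈ Finset.Icc 2 N, θ x ^ cycleCount x ρ
        = ∏ x ∈ Finset.Icc 2 N, θ x ^ ρ.cycleType.count x := by
      refine Finset.prod_congr rfl fun k hk => ?_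
      have hk2 : ¬ (k = 1) := by
        have := (Finset.mem_Icc.mp hk).1; omega
      simp [cycleCount, hk2]
    rw [hstep]
    refine (Finset.prod_subset ?hsub ?hzero).symm
    case hsub =>
      intro k hk
      have hk' := Multiset.mem_toFinset.mp hk
      have h2 := Equiv.Perm.two_le_of_mem_cycleType hk'
      have h3 := Equiv.Perm.le_card_support_of_mem_cycleType hk'
      have h4 : ρ.support.card ≤ N := le_trans (Finset.card_le_univ _) (by simp)
      simp only [Finset.mem_Icc]; omega
    case hzero =>
      intro k _ hk
      simp [Multiset.count_eq_zero_of_notMem (by simpa using hk)]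

noncomputable section
open scoped Classical

variable {n m : ℕ}

/-- embeddings encoding the rest of the cycle of `x0` -/
abbrev Emb (n m : ℕ) (hn : 0 < n) := Fin (m - 1) ↪ {x : Fin n // x ≠ ⟨0, hn⟩}

def theList (hn : 0 < n) (g : Emb n m hn) : List (Fin n) :=
  (⟨0, hn⟩ : Fin n) :: List.ofFn fun j => (g j).1

lemma theList_length (hn : 0 < n) (hm : 1 ≤ m) (g : Emb n m hn) :
    (theList hn g).length = m := by
  simp [theList]; omega

lemma theList_nodup (hn : 0 < n) (g : Emb n m hn) : (theList hn g).Nodup := by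
  refine List.nodup_cons.mpr ⟨?_, ?_⟩
  · simp only [List.mem_ofFn]
    rintro ⟨j, hj⟩
    exact (g j).2 hj
  · rw [List.nodup_ofFn]
    exact Subtype.val_injective.comp g.injective

lemma theList_getElem_zero (hn : 0 < n) (g : Emb n m hn) :
    (theList hn g)[0]'(by simp [theList]) = (⟨0, hn⟩ : Fin n) := rfl

def Sg (hn : 0 < n) (g : Emb n m hn) : Finset (Fin n) := (theList hn g).toFinset

lemma mem_Sg (hn : 0 < n) (g : Emb n m hn) {x : Fin n} :
    x ∈ Sg hn g ↔ x ∈ theList hn g := List.mem_toFinset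

lemma card_Sg (hn : 0 < n) (hm : 1 ≤ m) (g : Emb n m hn) : (Sg hn g).card = m := by
  rw [Sg, List.toFinset_card_of_nodup (theList_nodup hn g), theList_length hn hm g]

/-- the cycle through `x0` -/
def cyc (hn : 0 < n) (g : Emb n m hn) : Equiv.Perm (Fin n) := (theList hn g).formPerm

lemma cyc_apply_of_not_mem (hn : 0 < n) (g : Emb n m hn) {x : Fin n} (hx : x ∉ Sg hn g) :
    cyc hn g x = x :=
  List.formPerm_apply_of_notMem ((mem_Sg hn g).not.mp hx)

lemma card_compl (hn : 0 < n) (hm : 1 ≤ m) (hmn : m ≤ n) (g : Emb n m hn) :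
    Fintype.card {x : Fin n // x ∉ Sg hn g} = n - m := by
  have := Fintype.card_subtype_compl (fun x : Fin n => x ∈ Sg hn g)
  simp only [Fintype.card_fin] at this ⊢
  rw [this]
  congr 1
  rw [Fintype.card_coe]
  exact card_Sg hn hm g

/-- the chosen equivalence with the complement -/
def Eg (hn : 0 < n) (hm : 1 ≤ m) (hmn : m ≤ n) (g : Emb n m hn) :
    Fin (n - m) ≃ {x : Fin n // x ∉ Sg hn g} :=
  (Fintype.equivFinOfCardEq (card_compl hn hm hmn g)).symm

/-- the permutation built from the pair `(g, τ)` -/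
def Psi (hn : 0 < n) (hm : 1 ≤ m) (hmn : m ≤ n) (g : Emb n m hn) (τ : Equiv.Perm (Fin (n - m))) :
    Equiv.Perm (Fin n) :=
  cyc hn g * τ.extendDomain (Eg hn hm hmn g)

lemma ext_fix (hn : 0 < n) (hm : 1 ≤ m) (hmn : m ≤ n) (g : Emb n m hn)
    (τ : Equiv.Perm (Fin (n - m))) {x : Fin n} (hx : x ∈ Sg hn g) :
    τ.extendDomain (Eg hn hm hmn g) x = x :=
  Equiv.Perm.extendDomain_apply_not_subtype _ _ (by simpa using hx)

lemma ext_mem_compl (hn : 0 < n) (hm : 1 ≤ m) (hmn : m ≤ n) (g : Emb n m hn)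
    (τ : Equiv.Perm (Fin (n - m))) {x : Fin n} (hx : x ∉ Sg hn g) :
    τ.extendDomain (Eg hn hm hmn g) x ∉ Sg hn g := by
  rw [Equiv.Perm.extendDomain_apply_subtype τ (Eg hn hm hmn g) hx]
  exact ((Eg hn hm hmn g) (τ ((Eg hn hm hmn g).symm ⟨x, hx⟩))).2

lemma Psi_apply_of_mem (hn : 0 < n) (hm : 1 ≤ m) (hmn : m ≤ n) (g : Emb n m hn)
    (τ : Equiv.Perm (Fin (n - m))) {x : Fin n} (hx : x ∈ Sg hn g) :
    Psi hn hm hmn g τ x = cyc hn g x := by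
  rw [Psi, Equiv.Perm.mul_apply, ext_fix hn hm hmn g τ hx]

lemma Psi_apply_of_not_mem (hn : 0 < n) (hm : 1 ≤ m) (hmn : m ≤ n) (g : Emb n m hn)
    (τ : Equiv.Perm (Fin (n - m))) {x : Fin n} (hx : x ∉ Sg hn g) :
    Psi hn hm hmn g τ x = τ.extendDomain (Eg hn hm hmn g) x := by
  rw [Psi, Equiv.Perm.mul_apply,
    cyc_apply_of_not_mem hn g (ext_mem_compl hn hm hmn g τ hx)]

lemma Psi_pow_apply (hn : 0 < n) (hm : 1 ≤ m) (hmn : m ≤ n) (g : Emb n m hn)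
    (τ : Equiv.Perm (Fin (n - m))) (k : ℕ) :
    (Psi hn hm hmn g τ ^ k) (⟨0, hn⟩ : Fin n) =
      (theList hn g)[k % m]'(by rw [theList_length hn hm]; exact Nat.mod_lt _ hm) := by
  induction k with
  | zero => simp [theList]
  | succ k ih =>
    rw [pow_succ', Equiv.Perm.mul_apply, ih]
    have hmem : (theList hn g)[k % m]'(by rw [theList_length hn hm]; exact Nat.mod_lt _ hm)
        ∈ Sg hn g := (mem_Sg hn g).mpr (List.getElem_mem _)
    rw [Psi_apply_of_mem hn hm hmn g τ hmem, cyc]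
    rw [List.formPerm_apply_getElem _ (theList_nodup hn g)]
    congr 1
    rw [theList_length hn hm]
    exact Nat.mod_add_mod k m 1

lemma sameCycle_Psi (hn : 0 < n) (hm : 1 ≤ m) (hmn : m ≤ n) (g : Emb n m hn)
    (τ : Equiv.Perm (Fin (n - m))) {y : Fin n} :
    (Psi hn hm hmn g τ).SameCycle (⟨0, hn⟩ : Fin n) y ↔ y ∈ Sg hn g := by
  constructor
  · intro h
    obtain ⟨i, hi0, him, hiy⟩ := h.exists_pow_eq _
    rw [Psi_pow_apply hn hm hmn g τ i] at hiy
    rw [mem_Sg]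
    exact hiy ▸ List.getElem_mem _
  · intro hy
    obtain ⟨k, hk, hky⟩ := List.getElem_of_mem ((mem_Sg hn g).mp hy)
    rw [theList_length hn hm] at hk
    refine ⟨(k : ℤ), ?_⟩
    rw [zpow_natCast, Psi_pow_apply hn hm hmn g τ k, ← hky]
    congr 1
    exact Nat.mod_eq_of_lt hk

lemma lenCycleOfOne_Psi (hn : 0 < n) (hm : 1 ≤ m) (hmn : m ≤ n) (g : Emb n m hn)
    (τ : Equiv.Perm (Fin (n - m))) :
    lenCycleOfOne (Psi hn hm hmn g τ) = m := by
  rw [lenCycleOfOne, dif_pos hn]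
  have : (Finset.univ.filter fun y => (Psi hn hm hmn g τ).SameCycle ⟨0, hn⟩ y) = Sg hn g := by
    ext y
    simp [sameCycle_Psi hn hm hmn g τ]
  rw [this, card_Sg hn hm g]

lemma disjoint_cyc_ext (hn : 0 < n) (hm : 1 ≤ m) (hmn : m ≤ n) (g : Emb n m hn)
    (τ : Equiv.Perm (Fin (n - m))) :
    Equiv.Perm.Disjoint (cyc hn g) (τ.extendDomain (Eg hn hm hmn g)) := by
  intro x
  by_cases hx : x ∈ Sg hn g
  · exact Or.inr (ext_fix hn hm hmn g τ hx)
  · exact Or.inl (cyc_apply_of_not_mem hn g hx)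

lemma cyc_eq_one (hn : 0 < n) (hm1 : m = 1) (g : Emb n m hn) : cyc hn g = 1 := by
  have : theList hn g = [⟨0, hn⟩] := by
    rw [theList]
    congr 1
    have : m - 1 = 0 := by omega
    exact List.ofFn_eq_nil_iff.mpr this
  rw [cyc, this, List.formPerm_singleton]

lemma isCycle_cyc (hn : 0 < n) (hm : 1 ≤ m) (hm2 : 2 ≤ m) (g : Emb n m hn) :
    Equiv.Perm.IsCycle (cyc hn g) :=
  List.isCycle_formPerm (theList_nodup hn g) (by rw [theList_length hn hm]; exact hm2)

lemma support_cyc (hn : 0 < n) (hm : 1 ≤ m) (hm2 : 2 ≤ m) (g : Emb n m hn) :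
    (cyc hn g).support = Sg hn g := by
  rw [cyc, Sg]
  refine List.support_formPerm_of_nodup _ (theList_nodup hn g) ?_
  intro x hx
  have := theList_length hn hm g
  rw [hx] at this
  simp at this
  omega

lemma cycleType_Psi (hn : 0 < n) (hm : 1 ≤ m) (hm2 : 2 ≤ m) (hmn : m ≤ n) (g : Emb n m hn)
    (τ : Equiv.Perm (Fin (n - m))) :
    (Psi hn hm hmn g τ).cycleType = {m} + τ.cycleType := by
  rw [Psi, Equiv.Perm.Disjoint.cycleType_mul (disjoint_cyc_ext hn hm hmn g τ)]
  congr 1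
  · rw [(isCycle_cyc hn hm hm2 g).cycleType, support_cyc hn hm hm2 g, card_Sg hn hm g]
  · exact Equiv.Perm.cycleType_extendDomain _

lemma card_support_Psi (hn : 0 < n) (hm : 1 ≤ m) (hm2 : 2 ≤ m) (hmn : m ≤ n) (g : Emb n m hn)
    (τ : Equiv.Perm (Fin (n - m))) :
    (Psi hn hm hmn g τ).support.card = m + τ.support.card := by
  rw [Psi, Equiv.Perm.Disjoint.card_support_mul (disjoint_cyc_ext hn hm hmn g τ)]
  congr 1
  · rw [support_cyc hn hm hm2 g, card_Sg hn hm g]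
  · exact Equiv.Perm.card_support_extend_domain _

def PsiFull (hn : 0 < n) (hm : 1 ≤ m) (hmn : m ≤ n)
    (p : Emb n m hn × Equiv.Perm (Fin (n - m))) :
    {σ : Equiv.Perm (Fin n) // lenCycleOfOne σ = m} :=
  ⟨Psi hn hm hmn p.1 p.2, lenCycleOfOne_Psi hn hm hmn p.1 p.2⟩

lemma PsiFull_injective (hn : 0 < n) (hm : 1 ≤ m) (hmn : m ≤ n) :
    Function.Injective (PsiFull hn hm hmn) := by
  rintro ⟨g₁, τ₁⟩ ⟨g₂, τ₂⟩ h
  have h' : Psi hn hm hmn g₁ τ₁ = Psi hn hm hmn g₂ τ₂ := congrArg Subtype.val h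
  have hlist : theList hn g₁ = theList hn g₂ := by
    apply List.ext_getElem (by rw [theList_length hn hm, theList_length hn hm])
    intro k h₁ h₂
    have hk : k < m := by rwa [theList_length hn hm] at h₁
    have e1 := Psi_pow_apply hn hm hmn g₁ τ₁ k
    have e2 := Psi_pow_apply hn hm hmn g₂ τ₂ k
    rw [h', e2] at e1
    have hkm : k % m = k := Nat.mod_eq_of_lt hk
    simp only [hkm] at e1
    exact e1.symm
  have hg : g₁ = g₂ := by
    have htail : (List.ofFn fun j => (g₁ j).1) = List.ofFn fun j => (g₂ j).1 :=
      List.tail_eq_of_cons_eq hlist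
    have hfn := List.ofFn_injective htail
    ext j
    exact congrArg Fin.val (congrFun hfn j)
  subst hg
  have hτ' : τ₁.extendDomain (Eg hn hm hmn g₁) = τ₂.extendDomain (Eg hn hm hmn g₁) :=
    mul_left_cancel h'
  have hτ : τ₁ = τ₂ := by
    ext y
    have h1 := Equiv.Perm.extendDomain_apply_image τ₁ (Eg hn hm hmn g₁) y
    have h2 := Equiv.Perm.extendDomain_apply_image τ₂ (Eg hn hm hmn g₁) y
    rw [hτ'] at h1
    rw [h1] at h2
    exact congrArg Fin.val ((Eg hn hm hmn g₁).injective (Subtype.val_injective h2))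
  rw [hτ]

lemma pow_m_facts (hn : 0 < n) (hm : 1 ≤ m) (σ : Equiv.Perm (Fin n))
    (hσ : lenCycleOfOne σ = m) :
    (σ ^ m) (⟨0, hn⟩ : Fin n) = ⟨0, hn⟩ ∧
      ∀ i, i < m → ∀ j, j < m → (σ ^ i) (⟨0, hn⟩ : Fin n) = (σ ^ j) ⟨0, hn⟩ → i = j := by
  set x0 : Fin n := ⟨0, hn⟩ with hx0
  rw [lenCycleOfOne, dif_pos hn] at hσ
  rcases eq_or_lt_of_le hm with hm1 | hm2
  · have hx : σ x0 = x0 := by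
      by_contra hne
      have h1 : x0 ∈ Finset.univ.filter (fun y => σ.SameCycle x0 y) :=
        Finset.mem_filter.mpr ⟨Finset.mem_univ _, Equiv.Perm.SameCycle.refl σ x0⟩
      have h2 : σ x0 ∈ Finset.univ.filter (fun y => σ.SameCycle x0 y) :=
        Finset.mem_filter.mpr ⟨Finset.mem_univ _,
          Equiv.Perm.sameCycle_apply_right.mpr (Equiv.Perm.SameCycle.refl σ x0)⟩
      exact hne (Finset.card_le_one.mp (le_of_eq (hσ.trans hm1.symm)) _ h2 _ h1)
    refine ⟨Equiv.Perm.pow_apply_eq_self_of_apply_eq_self hx m, ?_⟩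
    intro i hi j hj _
    omega
  · have hx : σ x0 ≠ x0 := by
      intro hfix
      have hsub : Finset.univ.filter (fun y => σ.SameCycle x0 y) ⊆ {x0} := by
        intro y hy
        simp only [Finset.mem_filter] at hy
        obtain ⟨i, hi⟩ := hy.2
        rw [Finset.mem_singleton, ← hi]
        exact Equiv.Perm.zpow_apply_eq_self_of_apply_eq_self hfix i
      have hle := Finset.card_le_card hsub
      rw [hσ, Finset.card_singleton] at hle
      omega
    have hc : (σ.cycleOf x0).IsCycle := Equiv.Perm.isCycle_cycleOf σ hx
    have hsupp : (σ.cycleOf x0).support = Finset.univ.filter (fun y => σ.SameCycle x0 y) := by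
      ext y
      rw [Equiv.Perm.mem_support_cycleOf_iff]
      simp [Equiv.Perm.mem_support, hx]
    have hcard : (σ.cycleOf x0).support.card = m := by rw [hsupp]; exact hσ
    have horder : orderOf (σ.cycleOf x0) = m := by rw [hc.orderOf, hcard]
    have hpow : ∀ k : ℕ, (σ ^ k) x0 = ((σ.cycleOf x0) ^ k) x0 := fun k =>
      (Equiv.Perm.cycleOf_pow_apply_self σ x0 k).symm
    have hfixm : (σ ^ m) x0 = x0 := by
      rw [hpow m, ← horder, pow_orderOf_eq_one]; rfl
    refine ⟨hfixm, ?_⟩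
    have key : ∀ i j, i ≤ j → j < m → (σ ^ i) x0 = (σ ^ j) x0 → i = j := by
      intro i j hle hj hij
      have hfix : ((σ.cycleOf x0) ^ (j - i)) x0 = x0 := by
        have h1 : ((σ.cycleOf x0) ^ i) (((σ.cycleOf x0) ^ (j - i)) x0)
            = ((σ.cycleOf x0) ^ i) x0 := by
          rw [← Equiv.Perm.mul_apply, ← pow_add, Nat.add_sub_cancel' hle, ← hpow, ← hpow, hij]
        exact Equiv.injective _ h1
      have hcx : (σ.cycleOf x0) x0 ≠ x0 := by
        rw [Equiv.Perm.cycleOf_apply_self]; exact hx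
      have hdvd := orderOf_dvd_of_pow_eq_one ((hc.pow_eq_one_iff' hcx).mpr hfix)
      rw [horder] at hdvd
      rcases Nat.eq_zero_or_pos (j - i) with h0 | hpos
      · omega
      · have := Nat.le_of_dvd hpos hdvd; omega
    intro i hi j hj hij
    rcases le_total i j with h | h
    · exact key i j h hj hij
    · exact (key j i h hi hij.symm).symm

lemma PsiFull_surjective (hn : 0 < n) (hm : 1 ≤ m) (hmn : m ≤ n) :
    Function.Surjective (PsiFull hn hm hmn) := by
  rintro ⟨σ, hσ⟩
  set x0 : Fin n := ⟨0, hn⟩ with hx0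
  obtain ⟨hfixm, hinj⟩ := pow_m_facts hn hm σ hσ
  have hperiod : ∀ k : ℕ, (σ ^ (k % m)) x0 = (σ ^ k) x0 := by
    intro k
    conv_rhs => rw [← Nat.div_add_mod k m]
    rw [add_comm, pow_add, Equiv.Perm.mul_apply, pow_mul]
    congr 1
    exact (Equiv.Perm.pow_apply_eq_self_of_apply_eq_self hfixm (k / m)).symm
  -- the embedding
  have hneq : ∀ j : Fin (m - 1), (σ ^ ((j : ℕ) + 1)) x0 ≠ x0 := by
    intro j hj
    have := hinj ((j : ℕ) + 1) (by omega) 0 (by omega) (by simpa using hj)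
    omega
  set g : Emb n m hn := ⟨fun j => ⟨(σ ^ ((j : ℕ) + 1)) x0, hneq j⟩, by
    intro a b hab
    have := hinj ((a : ℕ) + 1) (by omega) ((b : ℕ) + 1) (by omega)
      (congrArg Subtype.val hab)
    exact Fin.ext (by omega)⟩ with hg
  have hlist_get : ∀ k, ∀ hk : k < m,
      (theList hn g)[k]'(by rw [theList_length hn hm]; exact hk) = (σ ^ k) x0 := by
    intro k hk
    rcases k with _ | k
    · simp [theList, hx0]
    · simp only [theList, List.getElem_cons_succ, List.getElem_ofFn, hg]
      rfl
  have hS : Sg hn g = Finset.univ.filter (fun y => σ.SameCycle x0 y) := by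
    refine Finset.eq_of_subset_of_card_le ?_ ?_
    · intro x hx
      obtain ⟨k, hk, hkx⟩ := List.getElem_of_mem ((mem_Sg hn g).mp hx)
      rw [theList_length hn hm] at hk
      rw [hlist_get k hk] at hkx
      simp only [Finset.mem_filter, Finset.mem_univ, true_and]
      exact ⟨(k : ℤ), by rw [zpow_natCast, hkx]⟩
    · rw [card_Sg hn hm g]
      rw [lenCycleOfOne, dif_pos hn] at hσ
      exact le_of_eq hσ
  have hcompl : ∀ x : Fin n, x ∉ Sg hn g ↔ σ x ∉ Sg hn g := by
    intro x
    rw [hS]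
    simp only [Finset.mem_filter, Finset.mem_univ, true_and]
    rw [Equiv.Perm.sameCycle_apply_right]
  set τ : Equiv.Perm (Fin (n - m)) :=
    (Eg hn hm hmn g).symm.permCongr (σ.subtypePerm (fun x => (hcompl x).symm)) with hτ
  refine ⟨(g, τ), ?_⟩
  apply Subtype.ext
  show Psi hn hm hmn g τ = σ
  apply Equiv.ext
  intro x
  by_cases hx : x ∈ Sg hn g
  · obtain ⟨k, hk, hkx⟩ := List.getElem_of_mem ((mem_Sg hn g).mp hx)
    rw [theList_length hn hm] at hk
    rw [Psi_apply_of_mem hn hm hmn g τ hx, ← hkx, cyc,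
      List.formPerm_apply_getElem _ (theList_nodup hn g)]
    have hlt : (k + 1) % (theList hn g).length < m := by
      rw [theList_length hn hm]; exact Nat.mod_lt _ hm
    have h1 : (theList hn g)[(k + 1) % (theList hn g).length]'(by
        rw [theList_length hn hm] at hlt ⊢; exact hlt) = (σ ^ ((k + 1) % m)) x0 := by
      have := hlist_get ((k + 1) % m) (Nat.mod_lt _ hm)
      rw [← this]
      congr 1
      rw [theList_length hn hm]
    rw [h1, hperiod (k + 1), hlist_get k hk, pow_succ, Equiv.Perm.mul_apply]
    have hc : σ ^ k * σ = σ * σ ^ k := ((Commute.refl σ).pow_left k)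
    rw [← Equiv.Perm.mul_apply, hc, Equiv.Perm.mul_apply]
  · rw [Psi_apply_of_not_mem hn hm hmn g τ hx,
      Equiv.Perm.extendDomain_apply_subtype τ (Eg hn hm hmn g) hx]
    simp [hτ, Equiv.permCongr_apply, Equiv.Perm.subtypePerm_apply]

lemma thetaWeight_Psi (θ : ℕ → ℝ) (hn : 0 < n) (hm : 1 ≤ m) (hmn : m ≤ n) (g : Emb n m hn)
    (τ : Equiv.Perm (Fin (n - m))) :
    thetaWeight θ (Psi hn hm hmn g τ) = θ m * thetaWeight θ τ := by
  have hst : τ.support.card ≤ n - m := by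
    have := Finset.card_le_univ τ.support
    simpa using this
  rcases eq_or_lt_of_le hm with hm1 | hm2
  · subst hm1
    have hPsi : Psi hn hm hmn g τ = τ.extendDomain (Eg hn hm hmn g) := by
      rw [Psi, cyc_eq_one hn rfl g, one_mul]
    rw [thetaWeight_eq θ, thetaWeight_eq θ τ, hPsi,
      Equiv.Perm.cycleType_extendDomain, Equiv.Perm.card_support_extend_domain]
    have hpow : n - τ.support.card = 1 + (n - 1 - τ.support.card) := by omega
    rw [hpow, pow_add, pow_one]
    ring
  · rw [thetaWeight_eq θ, thetaWeight_eq θ τ,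
      cycleType_Psi hn hm hm2 hmn g τ, card_support_Psi hn hm hm2 hmn g τ]
    rw [Multiset.map_add, Multiset.prod_add, Multiset.map_singleton, Multiset.prod_singleton]
    have hs : n - (m + τ.support.card) = n - m - τ.support.card := by omega
    rw [hs]
    ring

lemma card_Emb (hn : 0 < n) (hm : 1 ≤ m) :
    Fintype.card (Emb n m hn) = (n - 1).descFactorial (m - 1) := by
  rw [Fintype.card_embedding_eq]
  congr 1
  · rw [Fintype.card_subtype_compl, Fintype.card_fin, Fintype.card_subtype_eq]
  · exact Fintype.card_fin _

lemma key_sum (θ : ℕ → ℝ) (hn : 0 < n) (hm : 1 ≤ m) (hmn : m ≤ n) :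
    ∑ σ ∈ Finset.univ.filter (fun σ : Equiv.Perm (Fin n) => lenCycleOfOne σ = m),
        thetaWeight θ σ
      = ((n - 1).descFactorial (m - 1) : ℝ) * θ m *
          ∑ τ : Equiv.Perm (Fin (n - m)), thetaWeight θ τ := by
  have hbij : Function.Bijective (PsiFull hn hm hmn) :=
    ⟨PsiFull_injective hn hm hmn, PsiFull_surjective hn hm hmn⟩
  rw [Finset.sum_subtype (p := fun σ : Equiv.Perm (Fin n) => lenCycleOfOne σ = m) _ (by simp) (thetaWeight θ)]
  rw [← Equiv.sum_comp (Equiv.ofBijective (PsiFull hn hm hmn) hbij)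
    (fun s => thetaWeight θ s.1)]
  have h1 : ∀ p : Emb n m hn × Equiv.Perm (Fin (n - m)),
      thetaWeight θ ((Equiv.ofBijective (PsiFull hn hm hmn) hbij) p).1
        = θ m * thetaWeight θ p.2 := fun p => thetaWeight_Psi θ hn hm hmn p.1 p.2
  rw [Fintype.sum_congr _ _ h1, Fintype.sum_prod_type]
  have h2 : ∀ g : Emb n m hn,
      (∑ τ : Equiv.Perm (Fin (n - m)), θ m * thetaWeight θ τ)
        = θ m * ∑ τ : Equiv.Perm (Fin (n - m)), thetaWeight θ τ :=
    fun g => (Finset.mul_sum _ _ _).symm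
  rw [Fintype.sum_congr _ _ h2, Finset.sum_const, Finset.card_univ, card_Emb hn hm,
    nsmul_eq_mul, mul_assoc]

end

/-- `P_Θ[L_1 = m] = (θ_m/n) · h_{n-m}/h_n` for `1 ≤ m ≤ n`. -/
theorem stmt13 (θ : ℕ → ℝ) (hθ : ∀ m, 0 ≤ θ m) (n m : ℕ) (hm : 1 ≤ m) (hmn : m ≤ n) :
    probOfTheta θ {σ : Equiv.Perm (Fin n) | lenCycleOfOne σ = m} =
      θ m / n * (hTheta θ (n - m) / hTheta θ n) := by
  classical
  have hn : 0 < n := lt_of_lt_of_le hm hmn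
  have hL : probOfTheta θ {σ : Equiv.Perm (Fin n) | lenCycleOfOne σ = m}
      = (∑ σ ∈ Finset.univ.filter (fun σ : Equiv.Perm (Fin n) => lenCycleOfOne σ = m),
          thetaWeight θ σ) / (hTheta θ n * n.factorial) := by
    rw [probOfTheta, Finset.sum_filter, Finset.sum_div]
    refine Finset.sum_congr rfl fun σ _ => ?_
    by_cases hσ : lenCycleOfOne σ = m
    · simp [hσ, probTheta]
    · simp [hσ]
  rw [hL, key_sum θ hn hm hmn]
  set A := ∑ τ : Equiv.Perm (Fin (n - m)), thetaWeight θ τ with hA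
  have hhnm : hTheta θ (n - m) = A / (n - m).factorial := rfl
  rcases eq_or_ne (hTheta θ n) 0 with h0 | h0
  · rw [h0]
    simp
  · have hkey : ((n - 1).descFactorial (m - 1) : ℝ) * (n - m).factorial * n = n.factorial := by
      have h1 : (n - m).factorial * (n - 1).descFactorial (m - 1) = (n - 1).factorial := by
        have h := Nat.factorial_mul_descFactorial (n := n - 1) (k := m - 1) (by omega)
        have he : n - 1 - (m - 1) = n - m := by omega
        rwa [he] at h
      have h2 : n * (n - 1).factorial = n.factorial := Nat.mul_factorial_pred hn.ne'
      push_cast [← h2, ← h1]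
      ring
    rw [hhnm]
    have hnf : (n.factorial : ℝ) ≠ 0 := Nat.cast_ne_zero.mpr (Nat.factorial_ne_zero n)
    have hnmf : ((n - m).factorial : ℝ) ≠ 0 := Nat.cast_ne_zero.mpr (Nat.factorial_ne_zero _)
    have hnn : (n : ℝ) ≠ 0 := Nat.cast_ne_zero.mpr (by omega)
    field_simp
    linear_combination θ m * A * hkey
end
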